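/- For every integer n ≥ 5 there exists an almost peripheral graph of order n with exactly ⌊(n−1)²/2⌋ edges; if n is odd, this is attained by the complement of the disjoint union of K_1 and (n−1)/2 copies of K_2, and if n is even, it is attained by the complement of the disjoint union of K_1, (n−4)/2 copies of K_2, and a path P_3. -/

import Mathlib

open SimpleGraph

/-- The eccentricity of a vertex `v`: the maximum distance from `v` to any vertex. -/
noncomputable def graphEcc {V : Type*} [Fintype V] (G : SimpleGraph V) (v : V) : ℕ :=
  Finset.univ.sup fun u => G.dist v u

/-- The radius of a graph: the minimum eccentricity over all vertices. -/
noncomputable def graphRadius {V : Type*} [Fintype V] (G : SimpleGraph V) : ℕ :=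
  sInf (Set.range (graphEcc G))

/-- The diameter of a graph: the maximum eccentricity over all vertices. -/
noncomputable def graphDiam {V : Type*} [Fintype V] (G : SimpleGraph V) : ℕ :=
  Finset.univ.sup (graphEcc G)

/-- A connected graph of order `n` is almost self-centered if it has exactly `n - 2`
central vertices (vertices whose eccentricity equals the radius). -/
def IsAlmostSelfCentered {V : Type*} [Fintype V] (G : SimpleGraph V) : Prop :=
  G.Connected ∧ Nat.card {v : V | graphEcc G v = graphRadius G} = Fintype.card V - 2

/-- A connected graph of order `n` is almost peripheral if it has exactly `n - 1`
peripheral vertices (vertices whose eccentricity equals the diameter). -/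
def IsAlmostPeripheral {V : Type*} [Fintype V] (G : SimpleGraph V) : Prop :=
  G.Connected ∧ Nat.card {v : V | graphEcc G v = graphDiam G} = Fintype.card V - 1

/-- The disjoint union of `K_1` and `m` copies of `K_2`. -/
def K1PlusMatching (m : ℕ) : SimpleGraph (Unit ⊕ Fin m × Fin 2) :=
  SimpleGraph.fromRel fun a b =>
    match a, b with
    | Sum.inr (i, x), Sum.inr (j, y) => i = j ∧ x ≠ y
    | _, _ => False

/-- The disjoint union of `K_1`, `m` copies of `K_2`, and a path `P_3`. -/
def K1PlusMatchingPlusP3 (m : ℕ) : SimpleGraph (Unit ⊕ ((Fin m × Fin 2) ⊕ Fin 3)) :=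
  SimpleGraph.fromRel fun a b =>
    match a, b with
    | Sum.inr (Sum.inl (i, x)), Sum.inr (Sum.inl (j, y)) => i = j ∧ x ≠ y
    | Sum.inr (Sum.inr p), Sum.inr (Sum.inr q) => (SimpleGraph.pathGraph 3).Adj p q
    | _, _ => False

lemma almostPeripheral_core {V : Type*} [Fintype V] (G : SimpleGraph V) (u : V)
    (hcard : 2 ≤ Fintype.card V)
    (hu : ∀ v, v ≠ u → G.Adj u v)
    (hv : ∀ v, v ≠ u → ∃ w, w ≠ v ∧ ¬ G.Adj v w) :
    IsAlmostPeripheral G := by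
  classical
  have hconn : G.Connected := by
    rw [connected_iff]
    refine ⟨fun a b => ?_, ⟨u⟩⟩
    by_cases hab : a = b
    · subst hab; rfl
    by_cases ha : a = u
    · subst ha; exact (hu b (fun h => hab h.symm)).reachable
    by_cases hb : b = u
    · subst hb; exact ((hu a ha).symm).reachable
    exact ((hu a ha).symm.reachable).trans ((hu b hb).reachable)
  have hdist2 : ∀ a b : V, G.dist a b ≤ 2 := by
    intro a b
    by_cases hab : a = b
    · subst hab; rw [SimpleGraph.dist_self]; omega
    by_cases hadj : G.Adj a b
    · have := SimpleGraph.dist_eq_one_iff_adj.mpr hadj; omega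
    have ha : a ≠ u := fun h => hadj (h ▸ hu b (fun hb => hab (h.trans hb.symm)))
    have hb : b ≠ u := fun h => hadj (h ▸ (hu a (fun h' => hab (h'.trans h.symm))).symm)
    simpa using SimpleGraph.dist_le (((hu a ha).symm.toWalk).append ((hu b hb).toWalk))
  have heccu : graphEcc G u = 1 := by
    obtain ⟨v, hv'⟩ := Fintype.exists_ne_of_one_lt_card (by omega) u
    apply le_antisymm
    · apply Finset.sup_le; intro w _
      by_cases hw : w = u
      · simp [hw, SimpleGraph.dist_self]
      · exact le_of_eq (SimpleGraph.dist_eq_one_iff_adj.mpr (hu w hw))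
    · calc 1 = G.dist u v := (SimpleGraph.dist_eq_one_iff_adj.mpr (hu v hv')).symm
      _ ≤ _ := Finset.le_sup (Finset.mem_univ v)
  have heccv : ∀ v, v ≠ u → graphEcc G v = 2 := by
    intro v hvne
    obtain ⟨w, hwv, hnadj⟩ := hv v hvne
    have h1 : G.dist v w ≠ 1 := fun h => hnadj (SimpleGraph.dist_eq_one_iff_adj.mp h)
    have h0 : 0 < G.dist v w := hconn.pos_dist_of_ne (Ne.symm hwv)
    have h2 : G.dist v w ≤ 2 := hdist2 v w
    apply le_antisymm
    · exact Finset.sup_le fun w _ => hdist2 v w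
    · calc 2 = G.dist v w := by omega
      _ ≤ _ := Finset.le_sup (Finset.mem_univ w)
  have hdiam : graphDiam G = 2 := by
    obtain ⟨v, hv'⟩ := Fintype.exists_ne_of_one_lt_card (by omega) u
    apply le_antisymm
    · apply Finset.sup_le; intro w _
      by_cases hw : w = u
      · rw [hw, heccu]; omega
      · exact le_of_eq (heccv w hw)
    · rw [← heccv v hv']; exact Finset.le_sup (Finset.mem_univ v)
  refine ⟨hconn, ?_⟩
  have hset : {v : V | graphEcc G v = graphDiam G} = {u}ᶜ := by
    ext v
    simp only [Set.mem_setOf_eq, Set.mem_compl_iff, Set.mem_singleton_iff, hdiam]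
    constructor
    · intro h hvu; rw [hvu, heccu] at h; omega
    · exact heccv v
  rw [hset, Nat.card_eq_fintype_card, Fintype.card_compl_set]
  simp

lemma ncard_edgeSet_compl {V : Type*} [Fintype V] (G : SimpleGraph V) :
    Gᶜ.edgeSet.ncard = (Fintype.card V).choose 2 - G.edgeSet.ncard := by
  classical
  have hdisj : Disjoint G.edgeSet Gᶜ.edgeSet := by
    rw [Set.disjoint_iff_inter_eq_empty, ← SimpleGraph.edgeSet_inf]
    simp
  have hsup : G.edgeSet ∪ Gᶜ.edgeSet = (⊤ : SimpleGraph V).edgeSet := by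
    rw [← SimpleGraph.edgeSet_sup, sup_compl_eq_top]
  have htop : (⊤ : SimpleGraph V).edgeSet.ncard = (Fintype.card V).choose 2 := by
    rw [Set.ncard_eq_toFinset_card']
    simpa [SimpleGraph.edgeFinset] using
      (SimpleGraph.card_edgeFinset_top_eq_card_choose_two (V := V))
  have h := Set.ncard_union_eq hdisj (Set.toFinite _) (Set.toFinite _)
  rw [hsup, htop] at h
  omega

lemma ncard_K1PlusMatching (m : ℕ) : (K1PlusMatching m).edgeSet.ncard = m := by
  rw [← Nat.card_coe_set_eq]
  have e : (K1PlusMatching m).edgeSet ≃ Fin m := by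
    apply Equiv.symm
    apply Equiv.ofBijective
      (fun i => (⟨s(Sum.inr (i, 0), Sum.inr (i, 1)), by
        simp [K1PlusMatching, SimpleGraph.fromRel_adj]⟩ : (K1PlusMatching m).edgeSet))
    constructor
    · intro i j hij
      simp only [Subtype.mk.injEq, Sym2.eq, Sym2.rel_iff', Prod.mk.injEq, Sum.inr.injEq,
        Prod.swap_prod_mk, Subtype.ext_iff, Sym2.eq_iff] at hij
      rcases hij with ⟨h, -⟩ | ⟨h, -⟩ <;> simp_all
    · rintro ⟨e, he⟩
      revert he
      refine Sym2.ind (fun a b => ?_) e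
      intro he
      rw [SimpleGraph.mem_edgeSet] at he
      rcases a with _ | ⟨i, x⟩ <;> rcases b with _ | ⟨j, y⟩ <;>
        simp only [K1PlusMatching, SimpleGraph.fromRel_adj] at he
      · exact absurd he.2 (by simp)
      · exact absurd he.2 (by simp)
      · exact absurd he.2 (by simp)
      obtain ⟨hne, h⟩ := he
      have hij : i = j := by tauto
      have hxy : x ≠ y := by rintro rfl; simp at hne; tauto
      subst hij
      fin_cases x <;> fin_cases y <;> simp at hxy
      · exact ⟨i, rfl⟩
      · exact ⟨i, Subtype.ext (Sym2.eq_swap)⟩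
  rw [Nat.card_congr e, Nat.card_eq_fintype_card, Fintype.card_fin]

lemma ncard_K1PlusMatchingPlusP3 (m : ℕ) :
    (K1PlusMatchingPlusP3 m).edgeSet.ncard = m + 2 := by
  rw [← Nat.card_coe_set_eq]
  have e : (K1PlusMatchingPlusP3 m).edgeSet ≃ (Fin m ⊕ Fin 2) := by
    apply Equiv.symm
    apply Equiv.ofBijective (fun i =>
      match i with
      | Sum.inl i => (⟨s(Sum.inr (Sum.inl (i, 0)), Sum.inr (Sum.inl (i, 1))), by
          simp [K1PlusMatchingPlusP3, SimpleGraph.fromRel_adj]⟩ :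
          (K1PlusMatchingPlusP3 m).edgeSet)
      | Sum.inr 0 => ⟨s(Sum.inr (Sum.inr 0), Sum.inr (Sum.inr 1)), by
          simp [K1PlusMatchingPlusP3, SimpleGraph.fromRel_adj, SimpleGraph.pathGraph_adj]⟩
      | Sum.inr 1 => ⟨s(Sum.inr (Sum.inr 1), Sum.inr (Sum.inr 2)), by
          simp [K1PlusMatchingPlusP3, SimpleGraph.fromRel_adj, SimpleGraph.pathGraph_adj]⟩)
    constructor
    · rintro (i | x) (j | y) hij
      · simp only [Subtype.mk.injEq, Sym2.eq, Sym2.rel_iff', Prod.mk.injEq, Sum.inr.injEq,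
          Sum.inl.injEq, Prod.swap_prod_mk, Subtype.ext_iff, Sym2.eq_iff] at hij
        rcases hij with ⟨h, -⟩ | ⟨h, -⟩ <;> simp_all
      · fin_cases y <;> simp_all [Sym2.eq, Sym2.rel_iff', Prod.swap_prod_mk, Subtype.ext_iff, Sym2.eq_iff]
      · fin_cases x <;> simp_all [Sym2.eq, Sym2.rel_iff', Prod.swap_prod_mk, Subtype.ext_iff, Sym2.eq_iff]
      · fin_cases x <;> fin_cases y <;> simp_all [Sym2.eq, Sym2.rel_iff', Prod.swap_prod_mk]
    · rintro ⟨e, he⟩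
      revert he
      refine Sym2.ind (fun a b => ?_) e
      intro he
      rw [SimpleGraph.mem_edgeSet] at he
      rcases a with _ | (⟨i, x⟩ | p) <;> rcases b with _ | (⟨j, y⟩ | q) <;>
        simp only [K1PlusMatchingPlusP3, SimpleGraph.fromRel_adj] at he
      · exact absurd he.2 (by simp)
      · exact absurd he.2 (by simp)
      · exact absurd he.2 (by simp)
      · exact absurd he.2 (by simp)
      case _ =>
        obtain ⟨hne, h⟩ := he
        have hij : i = j := by tauto
        have hxy : x ≠ y := by rintro rfl; simp at hne; tauto
        subst hij
        fin_cases x <;> fin_cases y <;> simp at hxy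
        · exact ⟨Sum.inl i, rfl⟩
        · exact ⟨Sum.inl i, Subtype.ext (Sym2.eq_swap)⟩
      case _ => exact absurd he.2 (by simp)
      case _ => exact absurd he.2 (by simp)
      case _ => exact absurd he.2 (by simp)
      case _ =>
        obtain ⟨hne, h⟩ := he
        have hpq : (SimpleGraph.pathGraph 3).Adj p q := by
          rcases h with h | h
          · exact h
          · exact h.symm
        rw [SimpleGraph.pathGraph_adj] at hpq
        fin_cases p <;> fin_cases q <;> simp_all
  rw [Nat.card_congr e, Nat.card_eq_fintype_card]
  simp

theorem exists_almostPeripheral_max_size (n : ℕ) (h5 : 5 ≤ n) :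
    (Odd n →
      IsAlmostPeripheral (K1PlusMatching ((n - 1) / 2))ᶜ ∧
      Fintype.card (Unit ⊕ Fin ((n - 1) / 2) × Fin 2) = n ∧
      ((K1PlusMatching ((n - 1) / 2))ᶜ).edgeSet.ncard = (n - 1) ^ 2 / 2) ∧
    (Even n →
      IsAlmostPeripheral (K1PlusMatchingPlusP3 ((n - 4) / 2))ᶜ ∧
      Fintype.card (Unit ⊕ ((Fin ((n - 4) / 2) × Fin 2) ⊕ Fin 3)) = n ∧
      ((K1PlusMatchingPlusP3 ((n - 4) / 2))ᶜ).edgeSet.ncard = (n - 1) ^ 2 / 2) := by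
  constructor
  · intro hodd
    rw [Nat.odd_iff] at hodd
    obtain ⟨m, rfl⟩ : ∃ m, n = 2 * m + 1 := ⟨(n - 1) / 2, by omega⟩
    have hm : (2 * m + 1 - 1) / 2 = m := by omega
    rw [hm]
    have hcV : Fintype.card (Unit ⊕ Fin m × Fin 2) = 2 * m + 1 := by
      simp; omega
    refine ⟨?_, hcV, ?_⟩
    · apply almostPeripheral_core _ (Sum.inl ())
      · omega
      · intro v hv
        rw [SimpleGraph.compl_adj]
        refine ⟨Ne.symm hv, ?_⟩
        rcases v with _ | ⟨i, x⟩ <;> simp [K1PlusMatching]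
      · intro v hv
        rcases v with u | ⟨i, x⟩
        · exact absurd rfl hv
        have hxx : x ≠ x + 1 := by fin_cases x <;> decide
        refine ⟨Sum.inr (i, x + 1), ?_, ?_⟩
        · simp [Ne.symm hxx]
        · intro hadj
          exact hadj.2 (by simp [K1PlusMatching, hxx])
    · rw [ncard_edgeSet_compl, ncard_K1PlusMatching, hcV, Nat.choose_two_right]
      have e0 : 2 * m + 1 - 1 = 2 * m := by omega
      rw [e0, pow_two]
      have e1 : (2 * m + 1) * (2 * m) = 2 * (2 * (m * m) + m) := by ring
      have e2 : (2 * m) * (2 * m) = 2 * (2 * (m * m)) := by ring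
      rw [e1, e2, Nat.mul_div_cancel_left _ (by norm_num : 0 < 2),
        Nat.mul_div_cancel_left _ (by norm_num : 0 < 2)]
      omega
  · intro heven
    rw [Nat.even_iff] at heven
    obtain ⟨m, rfl⟩ : ∃ m, n = 2 * m + 4 := ⟨(n - 4) / 2, by omega⟩
    have hm : (2 * m + 4 - 4) / 2 = m := by omega
    rw [hm]
    have hcV : Fintype.card (Unit ⊕ ((Fin m × Fin 2) ⊕ Fin 3)) = 2 * m + 4 := by
      simp; omega
    refine ⟨?_, hcV, ?_⟩
    · apply almostPeripheral_core _ (Sum.inl ())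
      · omega
      · intro v hv
        rw [SimpleGraph.compl_adj]
        refine ⟨Ne.symm hv, ?_⟩
        rcases v with _ | (⟨i, x⟩ | p) <;> simp [K1PlusMatchingPlusP3]
      · intro v hv
        rcases v with u | (⟨i, x⟩ | p)
        · exact absurd rfl hv
        · have hxx : x ≠ x + 1 := by fin_cases x <;> decide
          refine ⟨Sum.inr (Sum.inl (i, x + 1)), ?_, ?_⟩
          · simp [Ne.symm hxx]
          · intro hadj
            exact hadj.2 (by simp [K1PlusMatchingPlusP3, hxx])
        · have hadjp : (SimpleGraph.pathGraph 3).Adj p (if p = 1 then 0 else 1) := by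
            fin_cases p <;> simp [SimpleGraph.pathGraph_adj]
          refine ⟨Sum.inr (Sum.inr (if p = 1 then 0 else 1)), ?_, ?_⟩
          · simpa using hadjp.ne'
          · intro hadj
            exact hadj.2 (by simp [K1PlusMatchingPlusP3, hadjp, hadjp.ne])
    · rw [ncard_edgeSet_compl, ncard_K1PlusMatchingPlusP3, hcV, Nat.choose_two_right]
      have e0 : 2 * m + 4 - 1 = 2 * m + 3 := by omega
      rw [e0, pow_two]
      have e1 : (2 * m + 4) * (2 * m + 3) = 2 * (2 * (m * m) + 7 * m + 6) := by ring
      have e2 : (2 * m + 3) * (2 * m + 3) = 2 * (2 * (m * m) + 6 * m + 4) + 1 := by ring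
      rw [e1, e2, Nat.mul_div_cancel_left _ (by norm_num : 0 < 2)]
      generalize m * m = k
      omega
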